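/- Let H and B be m-th order n-dimensional real symmetric tensors with m even and B positive definite (B x^m > 0 for all x ≠ 0), let f(x) = H x^m / B x^m with gradient g, and let η ∈ (0, 2). Fix x ∈ ℝ^n with ‖x‖ = 1, set p = g(x), and define the curve x(α) = [ (1 − α²‖p‖²) x − 2α p ] / (1 + α²‖p‖²). Then there exists ᾱ > 0 such that for all α ∈ (0, ᾱ], f(x(α)) ≤ f(x) − η α ‖g(x)‖²; hence the curvilinear (backtracking) search is well defined. -/

import Mathlib

/-- `A x^m` for an `m`-th order `n`-dimensional tensor `A`. -/
noncomputable def tpow {m n : ℕ} (A : (Fin m → Fin n) → ℝ) (x : EuclideanSpace ℝ (Fin n)) : ℝ :=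
  ∑ g : Fin m → Fin n, A g * ∏ j, x (g j)

/-- A tensor is symmetric if its entries are invariant under index permutations. -/
def TensorSymmetric {m n : ℕ} (A : (Fin m → Fin n) → ℝ) : Prop :=
  ∀ (σ : Equiv.Perm (Fin m)) (g : Fin m → Fin n), A (g ∘ σ) = A g

lemma tpow_diff {m n : ℕ} (A : (Fin m → Fin n) → ℝ) : Differentiable ℝ (tpow A) := by
  unfold tpow
  apply Differentiable.fun_sum
  intro g _
  apply Differentiable.const_mul
  intro y
  exact HasFDerivAt.finset_prod (fun j _ =>
    ((EuclideanSpace.proj (g j) : EuclideanSpace ℝ (Fin n) →L[ℝ] ℝ).hasFDerivAt (x := y)))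
    |>.differentiableAt

lemma curve_deriv {n : ℕ} (p x : EuclideanSpace ℝ (Fin n)) (c : ℝ) :
    HasDerivAt (fun α : ℝ => (1 / (1 + α ^ 2 * c)) •
      ((1 - α ^ 2 * c) • x - (2 * α) • p)) (-(2:ℝ) • p) 0 := by
  have hc0 : (1:ℝ) + 0 ^ 2 * c ≠ 0 := by norm_num
  have ha : HasDerivAt (fun α : ℝ => 1 + α ^ 2 * c) 0 0 := by
    simpa using ((hasDerivAt_pow 2 (0:ℝ)).mul_const c).const_add 1
  have hainv : HasDerivAt (fun α : ℝ => 1 / (1 + α ^ 2 * c)) 0 0 := by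
    simpa [one_div] using ha.fun_inv hc0
  have hb1 : HasDerivAt (fun α : ℝ => (1 - α ^ 2 * c) • x) (0 : EuclideanSpace ℝ (Fin n)) 0 := by
    simpa using (((hasDerivAt_pow 2 (0:ℝ)).mul_const c).const_sub 1).smul_const x
  have hb2 : HasDerivAt (fun α : ℝ => (2 * α) • p) ((2:ℝ) • p) 0 := by
    simpa using ((hasDerivAt_id (0:ℝ)).const_mul 2).smul_const p
  have := hainv.fun_smul (hb1.fun_sub hb2)
  refine this.congr_deriv ?_
  simp

/-- for `m` even, `B` positive definite, `f(x) = H x^m / B x^m` with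
gradient `g`, `η ∈ (0,2)`, a unit vector `x`, `p = g(x)`, and the curve
`x(α) = [(1 − α²‖p‖²) x − 2α p] / (1 + α²‖p‖²)`, there exists `ᾱ > 0` such that for
all `α ∈ (0, ᾱ]`, `f(x(α)) ≤ f(x) − η α ‖g(x)‖²`; hence the curvilinear
(backtracking) search is well defined. -/
theorem curvilinear_search_well_defined
    {m n : ℕ} (hm : Even m)
    (H B : (Fin m → Fin n) → ℝ)
    (hH : TensorSymmetric H) (hB : TensorSymmetric B)
    (hBpd : ∀ z : EuclideanSpace ℝ (Fin n), z ≠ 0 → 0 < tpow B z)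
    (η : ℝ) (hη : 0 < η) (hη2 : η < 2)
    (x : EuclideanSpace ℝ (Fin n)) (hx : ‖x‖ = 1)
    (p : EuclideanSpace ℝ (Fin n))
    (hp : p = gradient (fun y => tpow H y / tpow B y) x)
    (xc : ℝ → EuclideanSpace ℝ (Fin n))
    (hxc : ∀ α : ℝ, xc α = (1 / (1 + α ^ 2 * ‖p‖ ^ 2)) •
      ((1 - α ^ 2 * ‖p‖ ^ 2) • x - (2 * α) • p)) :
    ∃ αbar > (0 : ℝ), ∀ α ∈ Set.Ioc (0 : ℝ) αbar,
      tpow H (xc α) / tpow B (xc α)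
        ≤ tpow H x / tpow B x
          - η * α * ‖gradient (fun y => tpow H y / tpow B y) x‖ ^ 2 := by
  have hx0 : x ≠ 0 := fun h => by simp [h] at hx
  set f : EuclideanSpace ℝ (Fin n) → ℝ := fun y => tpow H y / tpow B y with hf
  have hxc0 : xc 0 = x := by rw [hxc]; simp
  by_cases hp0 : p = 0
  · refine ⟨1, one_pos, fun α hα => ?_⟩
    have : xc α = x := by rw [hxc, hp0]; simp
    rw [this, ← hp, hp0]
    simp
  -- p ≠ 0 case
  have hBx : tpow B x ≠ 0 := ne_of_gt (hBpd x hx0)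
  have hdH : DifferentiableAt ℝ (tpow H) x := (tpow_diff H).differentiableAt
  have hdB : DifferentiableAt ℝ (tpow B) x := (tpow_diff B).differentiableAt
  have hfd : DifferentiableAt ℝ f x := by
    have := hdH.fun_mul (hdB.fun_inv hBx)
    simpa [hf, div_eq_mul_inv] using this
  have hgrad : HasGradientAt f p x := hp ▸ hfd.hasGradientAt
  have hXC : HasDerivAt xc (-(2:ℝ) • p) 0 := by
    rw [show xc = _ from funext hxc]
    exact curve_deriv p x (‖p‖ ^ 2)
  have hφ : HasDerivAt (fun α => f (xc α)) (-2 * ‖p‖ ^ 2) 0 := by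
    have h2 : HasFDerivAt f ((InnerProductSpace.toDual ℝ _) p) (xc 0) := by
      rw [hxc0]; exact hgrad.hasFDerivAt
    have := h2.comp_hasDerivAt 0 hXC
    refine this.congr_deriv ?_
    simp only [InnerProductSpace.toDual_apply_apply, real_inner_smul_right,
      real_inner_self_eq_norm_sq]
  have hpn : 0 < ‖p‖ ^ 2 := pow_pos (norm_pos_iff.mpr hp0) 2
  have hlt : -2 * ‖p‖ ^ 2 < -(η * ‖p‖ ^ 2) := by nlinarith
  have hslope := hasDerivAt_iff_tendsto_slope.mp hφ
  have hev : ∀ᶠ α in nhdsWithin 0 (Set.Ioi 0),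
      slope (fun α => f (xc α)) 0 α < -(η * ‖p‖ ^ 2) :=
    (hslope.eventually_lt_const hlt).filter_mono
      (nhdsWithin_mono 0 (fun y hy => ne_of_gt hy))
  obtain ⟨u, hu, hsub⟩ := mem_nhdsGT_iff_exists_Ioc_subset.mp hev
  refine ⟨u, hu, fun α hα => ?_⟩
  have hs := hsub hα
  simp only [Set.mem_setOf_eq] at hs
  have hα0 : 0 < α := hα.1
  rw [slope_def_field] at hs
  have h3 : (f (xc α) - f x) / α < -(η * ‖p‖ ^ 2) := by
    rw [← hxc0]
    simpa [sub_zero] using hs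
  rw [div_lt_iff₀ hα0] at h3
  rw [← hp]
  show f (xc α) ≤ f x - η * α * ‖p‖ ^ 2
  nlinarith [h3]
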